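/- arXiv:1108.2427 — 2 statements merged into one kernel-verified Lean document; each statement's English description precedes it below -/
import Mathlib

section
/- Let L₁ and L₂ be regular languages over Σ with L₁ ⊆ ⋃_{α ∈ Σ^κ} Σ*·α·Σ*·overline(α) and L₂ ⊆ ⋃_{α ∈ Σ^κ} α·Σ*·overline(α)·Σ*. Let λ = max(λ_{L₁}, λ_{L₂}) and let η = λ_{H_κ(L₁,L₂)}. Then: η > 1 if and only if λ > 1; η = 1 if and only if λ = 1; and η = 0 if and only if λ = 0. In particular, the growth of H_κ(L₁,L₂) is exponential (respectively sub-exponential but infinite, respectively finite) if and only if the maximum growth of L₁ and L₂ is exponential (respectively sub-exponential but infinite, respectively finite). -/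
/-- The antimorphic extension of an involution on letters to words. -/
def ovr {σ : Type} (bar : σ → σ) (w : List σ) : List σ := (w.map bar).reverse

/-- The hairpin completion `H_κ(L₁, L₂)`. -/
def hairpinCompletion {σ : Type} (bar : σ → σ) (κ : ℕ) (L1 L2 : Language σ) :
    Language σ :=
  { π | ∃ γ α β : List σ,
      π = γ ++ α ++ β ++ ovr bar α ++ ovr bar γ ∧
      κ ≤ α.length ∧
      (γ ++ α ++ β ++ ovr bar α ∈ L1 ∨ α ++ β ++ ovr bar α ++ ovr bar γ ∈ L2) }

/-- The canonical factorization `(γ, α, β)` of a word `π` of the hairpin completion. -/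
def CanonFact {σ : Type} (bar : σ → σ) (κ : ℕ) (L1 L2 : Language σ)
    (π γ α β : List σ) : Prop :=
  π = γ ++ α ++ β ++ ovr bar α ++ ovr bar γ ∧
  α.length = κ ∧
  (γ ++ α ++ β ++ ovr bar α ∈ L1 ∨ α ++ β ++ ovr bar α ++ ovr bar γ ∈ L2) ∧
  (∀ u : List σ, u <+: π → u ∈ L1 → u <+: γ ++ α ++ β ++ ovr bar α) ∧
  (∀ u : List σ, u <:+ π → u ∈ L2 → u <:+ α ++ β ++ ovr bar α ++ ovr bar γ)

/-- The language of minimal gamma-alpha-prefixes of words of the hairpin completion. -/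
def MGP {σ : Type} (bar : σ → σ) (κ : ℕ) (L1 L2 : Language σ) : Language σ :=
  { p | ∃ π γ α β : List σ, π ∈ hairpinCompletion bar κ L1 L2 ∧
      CanonFact bar κ L1 L2 π γ α β ∧ p = γ ++ α }

/-- The language of middle factors of canonical factorizations of words
of the hairpin completion. -/
def Mid {σ : Type} (bar : σ → σ) (κ : ℕ) (L1 L2 : Language σ) : Language σ :=
  { β | ∃ π γ α : List σ, π ∈ hairpinCompletion bar κ L1 L2 ∧
      CanonFact bar κ L1 L2 π γ α β }

/-- The growth indicator of a language: the infimum of all `λ ≥ 0` such that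
`|L ∩ Σ^m| ≤ c·λ^m` for some constant `c > 0` and all `m`. -/
noncomputable def growthInd {σ : Type} (L : Language σ) : ℝ :=
  sInf { l : ℝ | 0 ≤ l ∧ ∃ c : ℝ, 0 < c ∧
    ∀ m : ℕ, (Set.ncard { w : List σ | w ∈ L ∧ w.length = m } : ℝ) ≤ c * l ^ m }


namespace HPAux

variable {σ : Type}

lemma length_ovr (bar : σ → σ) (w : List σ) : (ovr bar w).length = w.length := by
  simp [ovr]

lemma ovr_ovr {bar : σ → σ} (hbar : ∀ a, bar (bar a) = a) (w : List σ) :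
    ovr bar (ovr bar w) = w := by
  have h : bar ∘ bar = id := funext hbar
  simp [ovr, List.map_reverse, List.map_map, h]

/-- number of words of length `m` in `L` -/
noncomputable def cnt (L : Language σ) (m : ℕ) : ℕ :=
  Set.ncard { w : List σ | w ∈ L ∧ w.length = m }

lemma finite_cntset [Fintype σ] (L : Language σ) (m : ℕ) :
    { w : List σ | w ∈ L ∧ w.length = m }.Finite :=
  (List.finite_length_eq σ m).subset (fun _ h => h.2)

lemma cnt_le_card_pow [Fintype σ] [Nonempty σ] (L : Language σ) (m : ℕ) :
    cnt L m ≤ Fintype.card σ ^ m := by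
  classical
  have hinj : Set.InjOn (fun w : List σ => fun i : Fin m => w.getD i (Classical.arbitrary σ))
      { w : List σ | w ∈ L ∧ w.length = m } := by
    intro w hw w' hw' h
    refine List.ext_getElem (hw.2.trans hw'.2.symm) ?_
    intro i hi hi'
    have := congrFun h ⟨i, hw.2 ▸ hi⟩
    simpa [List.getD_eq_getElem?_getD, List.getElem?_eq_getElem, hi, hi'] using this
  have := Set.ncard_le_ncard_of_injOn _ (fun w _ => Set.mem_univ _) hinj
    (Set.finite_univ (α := Fin m → σ))
  calc cnt L m ≤ (Set.univ : Set (Fin m → σ)).ncard := this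
    _ = Fintype.card σ ^ m := by
        simp [Set.ncard_univ, Nat.card_eq_fintype_card]

/-- the defining set of the growth indicator -/
def SP (L : Language σ) : Set ℝ :=
  { l : ℝ | 0 ≤ l ∧ ∃ c : ℝ, 0 < c ∧
    ∀ m : ℕ, ((cnt L m : ℕ) : ℝ) ≤ c * l ^ m }

noncomputable def gI (L : Language σ) : ℝ := sInf (SP L)

lemma SP_nonempty [Fintype σ] [Nonempty σ] (L : Language σ) : (SP L).Nonempty := by
  refine ⟨(Fintype.card σ : ℝ), by positivity, 1, one_pos, fun m => ?_⟩
  rw [one_mul]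
  calc ((cnt L m : ℕ) : ℝ) ≤ ((Fintype.card σ ^ m : ℕ) : ℝ) := by
        exact_mod_cast cnt_le_card_pow L m
    _ = (Fintype.card σ : ℝ) ^ m := by push_cast; ring

lemma SP_bddBelow (L : Language σ) : BddBelow (SP L) := ⟨0, fun _ hl => hl.1⟩

lemma gI_nonneg [Fintype σ] [Nonempty σ] (L : Language σ) : 0 ≤ gI L :=
  le_csInf (SP_nonempty L) fun _ hl => hl.1

lemma gI_le_of_mem (L : Language σ) {t : ℝ} (ht : t ∈ SP L) : gI L ≤ t :=
  csInf_le (SP_bddBelow L) ht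

/-- length-boundedness -/
def LenBdd (L : Language σ) : Prop := ∃ N : ℕ, ∀ w ∈ L, w.length ≤ N

lemma gI_eq_zero_of_lenBdd [Fintype σ] [Nonempty σ] {L : Language σ}
    (h : LenBdd L) : gI L = 0 := by
  obtain ⟨N, hN⟩ := h
  have key : ∀ ε : ℝ, 0 < ε → ε ≤ 1 → gI L ≤ ε := by
    intro ε hε hε1
    refine gI_le_of_mem L ⟨hε.le, (Fintype.card σ : ℝ) ^ N / ε ^ N, by positivity, fun m => ?_⟩
    rcases le_or_gt m N with hm | hm
    · have h1 : ((cnt L m : ℕ) : ℝ) ≤ (Fintype.card σ : ℝ) ^ N := by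
        calc ((cnt L m : ℕ) : ℝ) ≤ ((Fintype.card σ ^ m : ℕ) : ℝ) := by
              exact_mod_cast cnt_le_card_pow L m
          _ = (Fintype.card σ : ℝ) ^ m := by push_cast; ring
          _ ≤ (Fintype.card σ : ℝ) ^ N := by
              apply pow_le_pow_right₀ _ hm
              exact_mod_cast Fintype.card_pos
      have h2 : ε ^ N ≤ ε ^ m := pow_le_pow_of_le_one hε.le hε1 hm
      calc ((cnt L m : ℕ) : ℝ) ≤ (Fintype.card σ : ℝ) ^ N := h1
        _ = (Fintype.card σ : ℝ) ^ N / ε ^ N * ε ^ N := by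
            field_simp
        _ ≤ (Fintype.card σ : ℝ) ^ N / ε ^ N * ε ^ m := by
            apply mul_le_mul_of_nonneg_left h2 (by positivity)
    · have : { w : List σ | w ∈ L ∧ w.length = m } = ∅ := by
        ext w; simp only [Set.mem_setOf_eq, Set.mem_empty_iff_false, iff_false]
        rintro ⟨hw, rfl⟩; exact absurd (hN w hw) (by omega)
      simp only [cnt, this, Set.ncard_empty, Nat.cast_zero]
      positivity
  have h0 : 0 ≤ gI L := gI_nonneg L
  by_contra hne
  have hpos : 0 < gI L := lt_of_le_of_ne h0 (Ne.symm hne)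
  have := key (min 1 (gI L / 2)) (by positivity) (min_le_left _ _)
  have : gI L ≤ gI L / 2 := this.trans (min_le_right _ _)
  linarith

lemma one_le_gI_of_not_lenBdd [Fintype σ] [Nonempty σ] {L : Language σ}
    (h : ¬ LenBdd L) : 1 ≤ gI L := by
  refine le_csInf (SP_nonempty L) fun l hl => ?_
  obtain ⟨hl0, c, hc, hcnt⟩ := hl
  by_contra hlt
  push_neg at hlt
  obtain ⟨n, hn⟩ := exists_pow_lt_of_lt_one (show (0:ℝ) < 1 / c by positivity) hlt
  simp only [LenBdd, not_exists] at h
  have h' := h n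
  push_neg at h'
  obtain ⟨w, hw, hwn⟩ := h'
  have hone : 1 ≤ ((cnt L w.length : ℕ) : ℝ) := by
    have : 0 < cnt L w.length := by
      rw [cnt, Set.ncard_pos (finite_cntset L w.length)]
      exact ⟨w, hw, rfl⟩
    exact_mod_cast this
  have hle : l ^ w.length ≤ l ^ n := pow_le_pow_of_le_one hl0 hlt.le hwn.le
  have := hcnt w.length
  have : (1:ℝ) ≤ c * l ^ n := le_trans hone (this.trans (by nlinarith))
  have : c * l ^ n < c * (1 / c) := by nlinarith
  rw [mul_one_div, div_self hc.ne'] at this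
  linarith

lemma lenBdd_iff_gI_eq_zero [Fintype σ] [Nonempty σ] (L : Language σ) :
    LenBdd L ↔ gI L = 0 := by
  constructor
  · exact gI_eq_zero_of_lenBdd
  · intro h
    by_contra hb
    have := one_le_gI_of_not_lenBdd hb
    rw [h] at this; linarith

lemma gI_trichotomy [Fintype σ] [Nonempty σ] (L : Language σ) :
    gI L = 0 ∨ 1 ≤ gI L := by
  by_cases h : LenBdd L
  · exact Or.inl (gI_eq_zero_of_lenBdd h)
  · exact Or.inr (one_le_gI_of_not_lenBdd h)

/-- Bernoulli-type bound -/
lemma exists_linear_le_pow {r : ℝ} (hr : 1 < r) :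
    ∃ C : ℝ, 0 < C ∧ ∀ m : ℕ, (m + 1 : ℝ) ≤ C * r ^ m := by
  refine ⟨max 1 (1 / (r - 1)), lt_of_lt_of_le one_pos (le_max_left _ _), fun m => ?_⟩
  have hb : 1 + (m : ℝ) * (r - 1) ≤ r ^ m := by
    have := one_add_mul_le_pow (show (-2:ℝ) ≤ r - 1 by linarith) m
    simpa using this
  have hC1 : (1:ℝ) ≤ max 1 (1 / (r - 1)) := le_max_left _ _
  have hC2 : 1 / (r - 1) ≤ max 1 (1 / (r - 1)) := le_max_right _ _
  have hr1 : (0:ℝ) < r - 1 := by linarith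
  have hCr : 1 ≤ max 1 (1 / (r - 1)) * (r - 1) := by
    calc (1:ℝ) = (1 / (r-1)) * (r - 1) := by field_simp
      _ ≤ max 1 (1 / (r - 1)) * (r - 1) := by nlinarith
  have hm0 : (0:ℝ) ≤ (m:ℝ) := Nat.cast_nonneg m
  calc (m + 1 : ℝ) ≤ max 1 (1 / (r - 1)) * (1 + (m:ℝ) * (r - 1)) := by nlinarith
    _ ≤ max 1 (1 / (r - 1)) * r ^ m := by nlinarith

/-- cardinality bound through a finite bi-union -/
lemma ncard_le_sum_of_subset {α ι : Type*} (t : Finset ι) (f : ι → Set α)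
    (hf : ∀ i ∈ t, (f i).Finite) {S : Set α} (hS : S ⊆ ⋃ i ∈ t, f i) :
    S.ncard ≤ ∑ i ∈ t, (f i).ncard := by
  classical
  induction t using Finset.induction_on generalizing S with
  | empty =>
      simp only [Finset.notMem_empty, Set.iUnion_of_empty, Set.iUnion_empty,
        Set.subset_empty_iff] at hS
      simp [hS]
  | @insert a t hat ih =>
      have hS' : S \ f a ⊆ ⋃ i ∈ t, f i := by
        intro x hx
        have := hS hx.1
        simp only [Finset.mem_insert, Set.mem_iUnion, exists_prop] at this ⊢
        rcases this with ⟨i, hi | hi, hxi⟩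
        · exact absurd (hi ▸ hxi) hx.2
        · exact ⟨i, hi, hxi⟩
      have h1 : S.ncard ≤ (S ∩ f a).ncard + (S \ f a).ncard := by
        calc S.ncard = (S ∩ f a ∪ S \ f a).ncard := by rw [Set.inter_union_diff]
          _ ≤ _ := Set.ncard_union_le _ _
      have h2 : (S ∩ f a).ncard ≤ (f a).ncard :=
        Set.ncard_le_ncard Set.inter_subset_right (hf a (Finset.mem_insert_self a t))
      have h3 := ih (fun i hi => hf i (Finset.mem_insert_of_mem hi)) hS'
      rw [Finset.sum_insert hat]
      omega

end HPAux

namespace HPAux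

variable {σ : Type} {bar : σ → σ} {κ : ℕ} {L1 L2 : Language σ}

lemma memH_of_L1 {w : List σ} (hw : w ∈ L1) (u α v : List σ)
    (hα : α.length = κ) (heq : w = u ++ α ++ v ++ ovr bar α) :
    w ++ ovr bar u ∈ hairpinCompletion bar κ L1 L2 := by
  refine ⟨u, α, v, ?_, le_of_eq hα.symm, Or.inl (heq ▸ hw)⟩
  rw [heq]

lemma memH_of_L2 (hbar : ∀ a, bar (bar a) = a) {w : List σ} (hw : w ∈ L2)
    (α u v : List σ) (hα : α.length = κ) (heq : w = α ++ u ++ ovr bar α ++ v) :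
    ovr bar v ++ w ∈ hairpinCompletion bar κ L1 L2 := by
  refine ⟨ovr bar v, α, u, ?_, le_of_eq hα.symm, Or.inr ?_⟩
  · rw [heq, ovr_ovr hbar]
    simp [List.append_assoc]
  · rw [ovr_ovr hbar, ← heq]; exact hw

/-- upper combinatorial bound -/
lemma cnt_H_le (bar : σ → σ) (hbar : ∀ a, bar (bar a) = a) (κ : ℕ)
    (L1 L2 : Language σ) [Fintype σ] (m : ℕ) :
    cnt (hairpinCompletion bar κ L1 L2) m ≤
      ∑ j ∈ Finset.range (m + 1), (cnt L1 j + cnt L2 j) := by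
  classical
  set g1 : ℕ → List σ → List σ := fun j w => w ++ ovr bar (w.take (m - j)) with hg1
  set g2 : ℕ → List σ → List σ := fun j w => ovr bar (w.drop (j - (m - j))) ++ w with hg2
  have hsub : { π : List σ | π ∈ hairpinCompletion bar κ L1 L2 ∧ π.length = m } ⊆
      ⋃ j ∈ Finset.range (m + 1),
        (g1 j '' { w | w ∈ L1 ∧ w.length = j } ∪
         g2 j '' { w | w ∈ L2 ∧ w.length = j }) := by
    rintro π ⟨⟨γ, α, β, hπ, _, hc⟩, hlen⟩
    simp only [Set.mem_iUnion, Finset.mem_range, exists_prop]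
    rcases hc with hc | hc
    · set w : List σ := γ ++ α ++ β ++ ovr bar α with hwdef
      have hπw : π = w ++ ovr bar γ := hπ
      have hlw : m = w.length + γ.length := by
        rw [← hlen, hπw]; simp [length_ovr]
      refine ⟨w.length, by omega, Or.inl ⟨w, ⟨hc, rfl⟩, ?_⟩⟩
      have htake : w.take (m - w.length) = γ := by
        have h1 : m - w.length = γ.length := by omega
        rw [h1, hwdef]
        have : γ ++ α ++ β ++ ovr bar α = γ ++ (α ++ β ++ ovr bar α) := by
          simp [List.append_assoc]
        rw [this, List.take_left]
      rw [hg1]; simp only []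
      rw [htake, ← hπw]
    · set w : List σ := α ++ β ++ ovr bar α ++ ovr bar γ with hwdef
      have hπw : π = γ ++ w := by rw [hπ, hwdef]; simp [List.append_assoc]
      have hlw : m = γ.length + w.length := by
        rw [← hlen, hπw]; simp
      refine ⟨w.length, by omega, Or.inr ⟨w, ⟨hc, rfl⟩, ?_⟩⟩
      have hdrop : w.drop (w.length - (m - w.length)) = ovr bar γ := by
        have h1 : m - w.length = γ.length := by omega
        rw [h1, hwdef]
        have h2 : α ++ β ++ ovr bar α ++ ovr bar γ =
            (α ++ β ++ ovr bar α) ++ ovr bar γ := by simp [List.append_assoc]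
        have h3 : (α ++ β ++ ovr bar α ++ ovr bar γ).length - γ.length
            = (α ++ β ++ ovr bar α).length := by simp [length_ovr]; omega
        rw [h3, h2, List.drop_left]
      rw [hg2]; simp only []
      rw [hdrop, ovr_ovr hbar, ← hπw]
  have hfin : ∀ j ∈ Finset.range (m + 1),
      (g1 j '' { w | w ∈ L1 ∧ w.length = j } ∪
       g2 j '' { w | w ∈ L2 ∧ w.length = j }).Finite := fun j _ =>
    ((finite_cntset L1 j).image _).union ((finite_cntset L2 j).image _)
  calc cnt (hairpinCompletion bar κ L1 L2) m
      ≤ ∑ j ∈ Finset.range (m + 1),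
        (g1 j '' { w | w ∈ L1 ∧ w.length = j } ∪
         g2 j '' { w | w ∈ L2 ∧ w.length = j }).ncard :=
      ncard_le_sum_of_subset _ _ hfin hsub
    _ ≤ ∑ j ∈ Finset.range (m + 1), (cnt L1 j + cnt L2 j) := by
      apply Finset.sum_le_sum
      intro j _
      calc (g1 j '' { w | w ∈ L1 ∧ w.length = j } ∪
         g2 j '' { w | w ∈ L2 ∧ w.length = j }).ncard
          ≤ (g1 j '' { w | w ∈ L1 ∧ w.length = j }).ncard +
            (g2 j '' { w | w ∈ L2 ∧ w.length = j }).ncard :=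
          Set.ncard_union_le _ _
        _ ≤ cnt L1 j + cnt L2 j :=
          Nat.add_le_add (Set.ncard_image_le (finite_cntset L1 j))
            (Set.ncard_image_le (finite_cntset L2 j))

lemma cnt_L1_le [Fintype σ]
    (hL1 : ∀ w ∈ L1, ∃ u α v : List σ, α.length = κ ∧ w = u ++ α ++ v ++ ovr bar α)
    (n : ℕ) :
    cnt L1 n ≤ ∑ m ∈ Finset.Icc n (2 * n), cnt (hairpinCompletion bar κ L1 L2) m := by
  classical
  set f : List σ → List σ := fun w =>
    if h : w ∈ L1 then w ++ ovr bar (hL1 w h).choose else w with hf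
  set T : Set (List σ) := { π | π ∈ hairpinCompletion bar κ L1 L2 ∧
      n ≤ π.length ∧ π.length ≤ 2 * n } with hT
  have hfw : ∀ w (h : w ∈ L1), f w = w ++ ovr bar (hL1 w h).choose := by
    intro w h; rw [hf]; simp only [dif_pos h]
  have hmaps : ∀ w ∈ { w : List σ | w ∈ L1 ∧ w.length = n }, f w ∈ T := by
    rintro w ⟨hw, hwn⟩
    obtain ⟨α, v, hα, heq⟩ := (hL1 w hw).choose_spec
    rw [hT]
    have hmem : f w ∈ hairpinCompletion bar κ L1 L2 := by
      rw [hfw w hw]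
      exact memH_of_L1 hw _ α v hα heq
    have hul : (hL1 w hw).choose.length ≤ n := by
      have := congrArg List.length heq
      simp only [List.length_append, length_ovr] at this
      omega
    have hflen : (f w).length = n + (hL1 w hw).choose.length := by
      rw [hfw w hw]; simp [length_ovr, hwn]
    exact ⟨hmem, by omega, by omega⟩
  have hinj : Set.InjOn f { w : List σ | w ∈ L1 ∧ w.length = n } := by
    rintro w ⟨hw, hwn⟩ w' ⟨hw', hwn'⟩ heq
    rw [hfw w hw, hfw w' hw'] at heq
    calc w = (w ++ ovr bar (hL1 w hw).choose).take n := (List.take_left' hwn).symm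
      _ = (w' ++ ovr bar (hL1 w' hw').choose).take n := by rw [heq]
      _ = w' := List.take_left' hwn'
  have hTfin : T.Finite := (List.finite_length_le σ (2 * n)).subset fun π hπ => hπ.2.2
  have h1 : cnt L1 n ≤ T.ncard := Set.ncard_le_ncard_of_injOn f hmaps hinj hTfin
  have h2 : T ⊆ ⋃ m ∈ Finset.Icc n (2 * n),
      { π : List σ | π ∈ hairpinCompletion bar κ L1 L2 ∧ π.length = m } := by
    rintro π ⟨hπ, hl1, hl2⟩
    simp only [Set.mem_iUnion, Finset.mem_Icc, exists_prop]
    exact ⟨π.length, ⟨hl1, hl2⟩, hπ, rfl⟩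
  exact h1.trans (ncard_le_sum_of_subset _ _ (fun m _ => finite_cntset _ m) h2)

lemma cnt_L2_le [Fintype σ] (hbar : ∀ a, bar (bar a) = a)
    (hL2 : ∀ w ∈ L2, ∃ α u v : List σ, α.length = κ ∧ w = α ++ u ++ ovr bar α ++ v)
    (n : ℕ) :
    cnt L2 n ≤ ∑ m ∈ Finset.Icc n (2 * n), cnt (hairpinCompletion bar κ L1 L2) m := by
  classical
  set f : List σ → List σ := fun w =>
    if h : w ∈ L2 then ovr bar (hL2 w h).choose_spec.choose_spec.choose ++ w else w
    with hf
  set T : Set (List σ) := { π | π ∈ hairpinCompletion bar κ L1 L2 ∧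
      n ≤ π.length ∧ π.length ≤ 2 * n } with hT
  have hfw : ∀ w (h : w ∈ L2),
      f w = ovr bar (hL2 w h).choose_spec.choose_spec.choose ++ w := by
    intro w h; rw [hf]; simp only [dif_pos h]
  have hmaps : ∀ w ∈ { w : List σ | w ∈ L2 ∧ w.length = n }, f w ∈ T := by
    rintro w ⟨hw, hwn⟩
    obtain ⟨hα, heq⟩ := (hL2 w hw).choose_spec.choose_spec.choose_spec
    rw [hT]
    have hmem : f w ∈ hairpinCompletion bar κ L1 L2 := by
      rw [hfw w hw]
      exact memH_of_L2 hbar hw _ _ _ hα heq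
    have hvl : (hL2 w hw).choose_spec.choose_spec.choose.length ≤ n := by
      have := congrArg List.length heq
      simp only [List.length_append, length_ovr] at this
      omega
    have hflen : (f w).length = n + (hL2 w hw).choose_spec.choose_spec.choose.length := by
      rw [hfw w hw]; simp [length_ovr, hwn]; omega
    exact ⟨hmem, by omega, by omega⟩
  have hinj : Set.InjOn f { w : List σ | w ∈ L2 ∧ w.length = n } := by
    rintro w ⟨hw, hwn⟩ w' ⟨hw', hwn'⟩ heq
    rw [hfw w hw, hfw w' hw'] at heq
    have hll := congrArg List.length heq
    simp only [List.length_append, length_ovr, hwn, hwn'] at hll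
    have hvv : (ovr bar (hL2 w hw).choose_spec.choose_spec.choose).length
        = (ovr bar (hL2 w' hw').choose_spec.choose_spec.choose).length := by
      simp only [length_ovr]; omega
    calc w = (ovr bar (hL2 w hw).choose_spec.choose_spec.choose ++ w).drop
          (ovr bar (hL2 w hw).choose_spec.choose_spec.choose).length :=
          List.drop_left.symm
      _ = (ovr bar (hL2 w' hw').choose_spec.choose_spec.choose ++ w').drop
          (ovr bar (hL2 w' hw').choose_spec.choose_spec.choose).length := by
          rw [heq, hvv]
      _ = w' := List.drop_left
  have hTfin : T.Finite := (List.finite_length_le σ (2 * n)).subset fun π hπ => hπ.2.2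
  have h1 : cnt L2 n ≤ T.ncard := Set.ncard_le_ncard_of_injOn f hmaps hinj hTfin
  have h2 : T ⊆ ⋃ m ∈ Finset.Icc n (2 * n),
      { π : List σ | π ∈ hairpinCompletion bar κ L1 L2 ∧ π.length = m } := by
    rintro π ⟨hπ, hl1, hl2⟩
    simp only [Set.mem_iUnion, Finset.mem_Icc, exists_prop]
    exact ⟨π.length, ⟨hl1, hl2⟩, hπ, rfl⟩
  exact h1.trans (ncard_le_sum_of_subset _ _ (fun m _ => finite_cntset _ m) h2)

lemma lenBdd_H (hb1 : LenBdd L1) (hb2 : LenBdd L2) :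
    LenBdd (hairpinCompletion bar κ L1 L2) := by
  obtain ⟨N1, hN1⟩ := hb1
  obtain ⟨N2, hN2⟩ := hb2
  refine ⟨2 * (N1 + N2), ?_⟩
  rintro π ⟨γ, α, β, hπ, _, hc | hc⟩
  · have h1 := hN1 _ hc
    have := congrArg List.length hπ
    simp only [List.length_append, length_ovr] at this h1
    omega
  · have h2 := hN2 _ hc
    have := congrArg List.length hπ
    simp only [List.length_append, length_ovr] at this h2
    omega

lemma lenBdd_L1_of_H
    (hL1 : ∀ w ∈ L1, ∃ u α v : List σ, α.length = κ ∧ w = u ++ α ++ v ++ ovr bar α)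
    (hbH : LenBdd (hairpinCompletion bar κ L1 L2)) : LenBdd L1 := by
  obtain ⟨N, hN⟩ := hbH
  refine ⟨N, fun w hw => ?_⟩
  obtain ⟨u, α, v, hα, heq⟩ := hL1 w hw
  have := hN _ (memH_of_L1 (L2 := L2) hw u α v hα heq)
  simp only [List.length_append, length_ovr] at this
  omega

lemma lenBdd_L2_of_H (hbar : ∀ a, bar (bar a) = a)
    (hL2 : ∀ w ∈ L2, ∃ α u v : List σ, α.length = κ ∧ w = α ++ u ++ ovr bar α ++ v)
    (hbH : LenBdd (hairpinCompletion bar κ L1 L2)) : LenBdd L2 := by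
  obtain ⟨N, hN⟩ := hbH
  refine ⟨N, fun w hw => ?_⟩
  obtain ⟨α, u, v, hα, heq⟩ := hL2 w hw
  have := hN _ (memH_of_L2 (L1 := L1) hbar hw α u v hα heq)
  simp only [List.length_append, length_ovr] at this
  omega

end HPAux

namespace HPAux

variable {σ : Type} [Fintype σ] [Nonempty σ] {bar : σ → σ} {κ : ℕ} {L1 L2 : Language σ}

lemma gI_H_le_one (hbar : ∀ a, bar (bar a) = a)
    (h : max (gI L1) (gI L2) ≤ 1) :
    gI (hairpinCompletion bar κ L1 L2) ≤ 1 := by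
  have key : ∀ t' : ℝ, 1 < t' → gI (hairpinCompletion bar κ L1 L2) ≤ t' := by
    intro t' ht'
    set t : ℝ := (1 + t') / 2 with htdef
    have ht1 : 1 < t := by rw [htdef]; linarith
    have htt' : t < t' := by rw [htdef]; linarith
    have ht0 : (0:ℝ) < t := by linarith
    obtain ⟨l1, hl1mem, hl1t⟩ := exists_lt_of_csInf_lt (SP_nonempty L1)
      (lt_of_le_of_lt (le_trans (le_max_left _ _) h) ht1)
    obtain ⟨l2, hl2mem, hl2t⟩ := exists_lt_of_csInf_lt (SP_nonempty L2)
      (lt_of_le_of_lt (le_trans (le_max_right _ _) h) ht1)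
    obtain ⟨hl10, c1, hc1, hcnt1⟩ := hl1mem
    obtain ⟨hl20, c2, hc2, hcnt2⟩ := hl2mem
    obtain ⟨C, hC, hBer⟩ := exists_linear_le_pow (show 1 < t' / t by
      rw [lt_div_iff₀ ht0]; linarith)
    refine gI_le_of_mem _ ⟨by linarith, (c1 + c2) * C, by positivity, fun m => ?_⟩
    have step1 : ((cnt (hairpinCompletion bar κ L1 L2) m : ℕ) : ℝ) ≤
        ∑ j ∈ Finset.range (m + 1), (((cnt L1 j : ℕ) : ℝ) + ((cnt L2 j : ℕ) : ℝ)) := by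
      have := cnt_H_le bar hbar κ L1 L2 m
      calc ((cnt (hairpinCompletion bar κ L1 L2) m : ℕ) : ℝ)
          ≤ ((∑ j ∈ Finset.range (m + 1), (cnt L1 j + cnt L2 j) : ℕ) : ℝ) := by
            exact_mod_cast this
        _ = _ := by push_cast; ring
    have step2 : ∑ j ∈ Finset.range (m + 1), (((cnt L1 j : ℕ) : ℝ) + ((cnt L2 j : ℕ) : ℝ))
        ≤ ∑ j ∈ Finset.range (m + 1), (c1 + c2) * t ^ m := by
      apply Finset.sum_le_sum
      intro j hj
      have hjm : j ≤ m := by simpa [Nat.lt_succ_iff] using hj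
      have htj : t ^ j ≤ t ^ m := pow_le_pow_right₀ ht1.le hjm
      have h1 : ((cnt L1 j : ℕ) : ℝ) ≤ c1 * t ^ m :=
        (hcnt1 j).trans (by
          have : l1 ^ j ≤ t ^ j := pow_le_pow_left₀ hl10 hl1t.le j
          nlinarith)
      have h2 : ((cnt L2 j : ℕ) : ℝ) ≤ c2 * t ^ m :=
        (hcnt2 j).trans (by
          have : l2 ^ j ≤ t ^ j := pow_le_pow_left₀ hl20 hl2t.le j
          nlinarith)
      linarith
    have step3 : ∑ j ∈ Finset.range (m + 1), (c1 + c2) * t ^ m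
        = (m + 1 : ℝ) * ((c1 + c2) * t ^ m) := by
      rw [Finset.sum_const, Finset.card_range, nsmul_eq_mul]
      push_cast; ring
    have hBm := hBer m
    have htpow : (0:ℝ) < t ^ m := by positivity
    have hrt : (t' / t) ^ m * t ^ m = t' ^ m := by
      rw [← mul_pow, div_mul_cancel₀]
      exact ht0.ne'
    calc ((cnt (hairpinCompletion bar κ L1 L2) m : ℕ) : ℝ)
        ≤ (m + 1 : ℝ) * ((c1 + c2) * t ^ m) := by
          rw [← step3]; exact step1.trans step2
      _ ≤ (C * (t' / t) ^ m) * ((c1 + c2) * t ^ m) := by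
          apply mul_le_mul_of_nonneg_right hBm (by positivity)
      _ = (c1 + c2) * C * t' ^ m := by rw [← hrt]; ring
  by_contra hcon
  push_neg at hcon
  have := key ((1 + gI (hairpinCompletion bar κ L1 L2)) / 2) (by linarith)
  linarith

lemma gI_le_sq_of_cnt_le {L H' : Language σ}
    (hC : ∀ n, cnt L n ≤ ∑ m ∈ Finset.Icc n (2 * n), cnt H' m)
    {l : ℝ} (hl : l ∈ SP H') : gI L ≤ (max 1 l) ^ 2 := by
  obtain ⟨hl0, c, hc, hcnt⟩ := hl
  set M : ℝ := max 1 l with hMdef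
  have hM1 : (1:ℝ) ≤ M := le_max_left _ _
  have hM0 : (0:ℝ) < M := by linarith
  have key : ∀ n : ℕ, ((cnt L n : ℕ) : ℝ) ≤ (n + 1 : ℝ) * (c * (M ^ 2) ^ n) := by
    intro n
    have hcard : (Finset.Icc n (2 * n)).card = n + 1 := by rw [Nat.card_Icc]; omega
    calc ((cnt L n : ℕ) : ℝ)
        ≤ ((∑ m ∈ Finset.Icc n (2 * n), cnt H' m : ℕ) : ℝ) := by exact_mod_cast hC n
      _ = ∑ m ∈ Finset.Icc n (2 * n), ((cnt H' m : ℕ) : ℝ) := by push_cast; ring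
      _ ≤ ∑ m ∈ Finset.Icc n (2 * n), c * (M ^ 2) ^ n := by
          apply Finset.sum_le_sum
          intro m hm
          have hm2n : m ≤ 2 * n := (Finset.mem_Icc.mp hm).2
          have h1 : l ^ m ≤ M ^ m := pow_le_pow_left₀ hl0 (le_max_right _ _) m
          have h2 : M ^ m ≤ M ^ (2 * n) := pow_le_pow_right₀ hM1 hm2n
          have h3 : M ^ (2 * n) = (M ^ 2) ^ n := by rw [← pow_mul]
          calc ((cnt H' m : ℕ) : ℝ) ≤ c * l ^ m := hcnt m
            _ ≤ c * (M ^ 2) ^ n := by rw [← h3]; nlinarith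
      _ = (n + 1 : ℝ) * (c * (M ^ 2) ^ n) := by
          rw [Finset.sum_const, hcard, nsmul_eq_mul]; push_cast; ring
  have main : ∀ t : ℝ, M ^ 2 < t → gI L ≤ t := by
    intro t ht
    have hM2 : (0:ℝ) < M ^ 2 := by positivity
    obtain ⟨C, hC0, hBer⟩ := exists_linear_le_pow (show 1 < t / M ^ 2 by
      rw [lt_div_iff₀ hM2]; linarith)
    refine gI_le_of_mem _ ⟨by linarith, c * C, by positivity, fun n => ?_⟩
    have h1 := key n
    have h2 := hBer n
    have hpow : (0:ℝ) < (M ^ 2) ^ n := by positivity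
    have hrt : (t / M ^ 2) ^ n * (M ^ 2) ^ n = t ^ n := by
      rw [← mul_pow, div_mul_cancel₀]
      exact hM2.ne'
    calc ((cnt L n : ℕ) : ℝ) ≤ (n + 1 : ℝ) * (c * (M ^ 2) ^ n) := h1
      _ ≤ (C * (t / M ^ 2) ^ n) * (c * (M ^ 2) ^ n) := by
          apply mul_le_mul_of_nonneg_right h2 (by positivity)
      _ = c * C * t ^ n := by rw [← hrt]; ring
  by_contra hcon
  push_neg at hcon
  have := main ((M ^ 2 + gI L) / 2) (by linarith)
  linarith

lemma one_lt_gI_H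
    (hCa : ∀ n, cnt L1 n ≤ ∑ m ∈ Finset.Icc n (2 * n),
        cnt (hairpinCompletion bar κ L1 L2) m)
    (hCb : ∀ n, cnt L2 n ≤ ∑ m ∈ Finset.Icc n (2 * n),
        cnt (hairpinCompletion bar κ L1 L2) m)
    (hgt : 1 < max (gI L1) (gI L2)) :
    1 < gI (hairpinCompletion bar κ L1 L2) := by
  rw [lt_max_iff] at hgt
  have main : ∀ L : Language σ,
      (∀ n, cnt L n ≤ ∑ m ∈ Finset.Icc n (2 * n),
        cnt (hairpinCompletion bar κ L1 L2) m) →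
      1 < gI L → 1 < gI (hairpinCompletion bar κ L1 L2) := by
    intro L hC h1L
    set s : ℝ := Real.sqrt (gI L) with hsdef
    have hs1 : 1 < s := by
      rw [hsdef, show (1:ℝ) = Real.sqrt 1 by simp]
      exact Real.sqrt_lt_sqrt (by norm_num) h1L
    refine lt_of_lt_of_le hs1 (le_csInf (SP_nonempty _) fun l hl => ?_)
    have hsq : gI L ≤ (max 1 l) ^ 2 := gI_le_sq_of_cnt_le hC hl
    have hM0 : (0:ℝ) ≤ max 1 l := le_trans zero_le_one (le_max_left _ _)
    have hsM : s ≤ max 1 l := by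
      rw [hsdef]
      calc Real.sqrt (gI L) ≤ Real.sqrt ((max 1 l) ^ 2) := Real.sqrt_le_sqrt hsq
        _ = max 1 l := Real.sqrt_sq hM0
    rcases le_or_gt l 1 with hcase | hcase
    · rw [max_eq_left hcase] at hsM; linarith
    · rwa [max_eq_right hcase.le] at hsM
  rcases hgt with h | h
  · exact main L1 hCa h
  · exact main L2 hCb h

end HPAux


theorem growth_type_of_hairpin_completion
    {σ : Type} [Fintype σ] (hσ : 2 ≤ Fintype.card σ)
    (bar : σ → σ) (hbar : ∀ a, bar (bar a) = a)
    (κ : ℕ) (hκ : 1 ≤ κ)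
    (L1 L2 : Language σ) (h1 : L1.IsRegular) (h2 : L2.IsRegular)
    (hL1 : ∀ w ∈ L1, ∃ u α v : List σ,
      α.length = κ ∧ w = u ++ α ++ v ++ ovr bar α)
    (hL2 : ∀ w ∈ L2, ∃ α u v : List σ,
      α.length = κ ∧ w = α ++ u ++ ovr bar α ++ v) :
    (growthInd (hairpinCompletion bar κ L1 L2) > 1 ↔
        max (growthInd L1) (growthInd L2) > 1) ∧
    (growthInd (hairpinCompletion bar κ L1 L2) = 1 ↔
        max (growthInd L1) (growthInd L2) = 1) ∧
    (growthInd (hairpinCompletion bar κ L1 L2) = 0 ↔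
        max (growthInd L1) (growthInd L2) = 0) := by
  classical
  haveI hne : Nonempty σ := Fintype.card_pos_iff.mp (by omega)
  have ea : growthInd L1 = HPAux.gI L1 := rfl
  have eb : growthInd L2 = HPAux.gI L2 := rfl
  have eh : growthInd (hairpinCompletion bar κ L1 L2)
      = HPAux.gI (hairpinCompletion bar κ L1 L2) := rfl
  rw [ea, eb, eh]
  set a := HPAux.gI L1 with ha
  set b := HPAux.gI L2 with hb
  set η := HPAux.gI (hairpinCompletion bar κ L1 L2) with hη
  have hCa := fun n => HPAux.cnt_L1_le (L2 := L2) hL1 n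
  have hCb := fun n => HPAux.cnt_L2_le (L1 := L1) hbar hL2 n
  have ha0 : 0 ≤ a := HPAux.gI_nonneg L1
  have hb0 : 0 ≤ b := HPAux.gI_nonneg L2
  have hgtIff : 1 < η ↔ 1 < max a b := by
    constructor
    · intro h
      by_contra hc
      push_neg at hc
      have := HPAux.gI_H_le_one (κ := κ) hbar hc
      rw [← hη] at this
      linarith
    · exact HPAux.one_lt_gI_H hCa hCb
  have hmax0 : max a b = 0 ↔ a = 0 ∧ b = 0 := by
    constructor
    · intro h
      exact ⟨le_antisymm (le_trans (le_max_left a b) h.le) ha0,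
        le_antisymm (le_trans (le_max_right a b) h.le) hb0⟩
    · rintro ⟨h1, h2⟩; rw [h1, h2]; simp
  have hzeroIff : η = 0 ↔ max a b = 0 := by
    rw [hmax0, hη, ha, hb,
      ← HPAux.lenBdd_iff_gI_eq_zero, ← HPAux.lenBdd_iff_gI_eq_zero,
      ← HPAux.lenBdd_iff_gI_eq_zero]
    constructor
    · intro h
      exact ⟨HPAux.lenBdd_L1_of_H hL1 h, HPAux.lenBdd_L2_of_H hbar hL2 h⟩
    · rintro ⟨h1, h2⟩
      exact HPAux.lenBdd_H h1 h2
  have tH : η = 0 ∨ 1 ≤ η := HPAux.gI_trichotomy _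
  have tmax : max a b = 0 ∨ 1 ≤ max a b := by
    rcases HPAux.gI_trichotomy L1 with h1 | h1
    · rcases HPAux.gI_trichotomy L2 with h2 | h2
      · left; rw [← ha] at h1; rw [← hb] at h2; rw [h1, h2]; simp
      · right; exact le_trans h2 (le_max_right a b)
    · right; exact le_trans h1 (le_max_left a b)
  have honeIff : η = 1 ↔ max a b = 1 := by
    constructor
    · intro h
      have hle : max a b ≤ 1 := by
        by_contra hc
        push_neg at hc
        have := hgtIff.mpr hc
        linarith
      rcases tmax with h0 | h0
      · exact absurd (hzeroIff.mpr h0) (by rw [h]; norm_num)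
      · linarith
    · intro h
      have hle : η ≤ 1 := by
        have := HPAux.gI_H_le_one (κ := κ) hbar h.le
        rw [← hη] at this
        exact this
      rcases tH with h0 | h0
      · exact absurd (hzeroIff.mp h0) (by rw [h]; norm_num)
      · linarith
  exact ⟨hgtIff, honeIff, hzeroIff⟩
end

section
/- Let L₁ and L₂ be regular languages over Σ with L₁ ⊆ ⋃_{α ∈ Σ^κ} Σ*·α·Σ*·overline(α) and L₂ ⊆ ⋃_{α ∈ Σ^κ} α·Σ*·overline(α)·Σ*. If the hairpin completion H_κ(L₁,L₂) is regular, then λ_{H_κ(L₁,L₂)} = max(λ_{L₁}, λ_{L₂}); that is, the growth indicator of the hairpin completion equals the maximum of the growth indicators of L₁ and L₂. -/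
/-! ### Auxiliary lemmas -/

section OvrAux
variable {σ : Type} (bar : σ → σ)

lemma ovr_append (a b : List σ) : ovr bar (a ++ b) = ovr bar b ++ ovr bar a := by
  simp [ovr]

@[simp] lemma ovr_length (a : List σ) : (ovr bar a).length = a.length := by simp [ovr]

lemma ovr_ovr {bar : σ → σ} (hbar : ∀ a, bar (bar a) = a) (w : List σ) :
    ovr bar (ovr bar w) = w := by
  simp only [ovr, List.map_reverse, List.reverse_reverse, List.map_map]
  have : bar ∘ bar = id := funext hbar
  simp [this]

lemma ovr_take (γ : List σ) (k : ℕ) :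
    (ovr bar γ).take k = ovr bar (γ.drop (γ.length - k)) := by
  simp only [ovr, List.take_reverse, List.length_map, List.map_drop]

end OvrAux

noncomputable def cnt {σ : Type} (L : Language σ) (m : ℕ) : ℕ :=
  Set.ncard { w : List σ | w ∈ L ∧ w.length = m }

def gset {σ : Type} (L : Language σ) : Set ℝ :=
  { l : ℝ | 0 ≤ l ∧ ∃ c : ℝ, 0 < c ∧ ∀ m : ℕ, (cnt L m : ℝ) ≤ c * l ^ m }

set_option linter.unusedSectionVars false

section CntAux
variable {σ : Type} [Fintype σ]

lemma finite_len (S : Set (List σ)) (m : ℕ) (hS : ∀ w ∈ S, w.length = m) : S.Finite := by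
  have h : S ⊆ Set.range (fun v : Fin m → σ => List.ofFn v) := by
    intro w hw
    refine ⟨fun i => w.get ⟨i, by rw [hS w hw]; exact i.2⟩, ?_⟩
    apply List.ext_get (by simp [hS w hw])
    intro n h1 h2
    simp
  exact (Set.finite_range _).subset h

lemma cnt_finite (L : Language σ) (m : ℕ) : { w : List σ | w ∈ L ∧ w.length = m }.Finite :=
  finite_len _ m (fun _ hw => hw.2)

lemma cnt_le_pow (L : Language σ) (m : ℕ) : cnt L m ≤ Fintype.card σ ^ m := by
  have h : { w : List σ | w ∈ L ∧ w.length = m } ⊆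
      Set.range (fun v : Fin m → σ => List.ofFn v) := by
    intro w hw
    refine ⟨fun i => w.get ⟨i, by rw [hw.2]; exact i.2⟩, ?_⟩
    apply List.ext_get (by simp [hw.2])
    intro n h1 h2
    simp
  calc cnt L m ≤ (Set.range (fun v : Fin m → σ => List.ofFn v)).ncard :=
        Set.ncard_le_ncard h (Set.finite_range _)
    _ ≤ (Set.univ : Set (Fin m → σ)).ncard := by
        rw [← Set.image_univ]; exact Set.ncard_image_le (Set.finite_univ)
    _ = Fintype.card σ ^ m := by
        rw [Set.ncard_univ, Nat.card_eq_fintype_card]; simp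

lemma ncard_biUnion_le' {X ι : Type*} (t : Finset ι) (S : ι → Set X) :
    (⋃ i ∈ t, S i).ncard ≤ ∑ i ∈ t, (S i).ncard := by
  classical
  induction t using Finset.induction with
  | empty => simp
  | insert _ _ ha ih =>
    rename_i a t'
    rw [Finset.set_biUnion_insert, Finset.sum_insert ha]
    exact le_trans (Set.ncard_union_le _ _) (by gcongr)

lemma ncard_cover_le {X ι : Type*} (T : Set X) (t : Finset ι) (S : ι → Set X)
    (hfin : ∀ i ∈ t, (S i).Finite) (hcov : ∀ x ∈ T, ∃ i ∈ t, x ∈ S i) :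
    T.ncard ≤ ∑ i ∈ t, (S i).ncard := by
  have hsub : T ⊆ ⋃ i ∈ t, S i := by
    intro x hx; obtain ⟨i, hi, hxi⟩ := hcov x hx
    exact Set.mem_biUnion hi hxi
  have hfinU : (⋃ i ∈ t, S i).Finite := Set.Finite.biUnion t.finite_toSet hfin
  exact le_trans (Set.ncard_le_ncard hsub hfinU) (ncard_biUnion_le' t S)

lemma ncard_prod_eq {X Y : Type*} (A : Set X) (B : Set Y) :
    (A ×ˢ B).ncard = A.ncard * B.ncard := by
  rw [← Nat.card_coe_set_eq, ← Nat.card_coe_set_eq, ← Nat.card_coe_set_eq,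
    ← Nat.card_prod]
  exact Nat.card_congr (Equiv.Set.prod A B)

lemma cnt_le_one_cover {ι : Type*} (A B : Language σ) (m : ℕ) (t : Finset ι)
    (g : ι → ℕ) (F : ι → List σ → List σ)
    (h : ∀ w, w ∈ A → w.length = m →
      ∃ i ∈ t, ∃ π, π ∈ B ∧ π.length = g i ∧ F i π = w) :
    cnt A m ≤ ∑ i ∈ t, cnt B (g i) := by
  refine le_trans (ncard_cover_le _ t
    (fun i => F i '' { π : List σ | π ∈ B ∧ π.length = g i })
    (fun i _ => (cnt_finite B (g i)).image _) ?_) ?_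
  · rintro w ⟨hwA, hwm⟩
    obtain ⟨i, hit, π, hπB, hπlen, hF⟩ := h w hwA hwm
    exact ⟨i, hit, ⟨π, ⟨hπB, hπlen⟩, hF⟩⟩
  · exact Finset.sum_le_sum fun i _ => Set.ncard_image_le (cnt_finite B (g i))

lemma cnt_le_two_covers {ι₁ ι₂ : Type*} (A B C : Language σ) (m : ℕ)
    (t₁ : Finset ι₁) (t₂ : Finset ι₂) (g₁ : ι₁ → ℕ) (g₂ : ι₂ → ℕ)
    (F : ι₁ → List σ → List σ) (G : ι₂ → List σ → List σ)
    (h : ∀ w, w ∈ A → w.length = m →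
      (∃ i ∈ t₁, ∃ π, π ∈ B ∧ π.length = g₁ i ∧ F i π = w) ∨
      (∃ i ∈ t₂, ∃ π, π ∈ C ∧ π.length = g₂ i ∧ G i π = w)) :
    cnt A m ≤ (∑ i ∈ t₁, cnt B (g₁ i)) + (∑ i ∈ t₂, cnt C (g₂ i)) := by
  set U1 : Set (List σ) := ⋃ i ∈ t₁, F i '' { π : List σ | π ∈ B ∧ π.length = g₁ i } with hU1
  set U2 : Set (List σ) := ⋃ i ∈ t₂, G i '' { π : List σ | π ∈ C ∧ π.length = g₂ i } with hU2
  have hfin1 : U1.Finite := Set.Finite.biUnion t₁.finite_toSet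
    (fun i _ => (cnt_finite B (g₁ i)).image _)
  have hfin2 : U2.Finite := Set.Finite.biUnion t₂.finite_toSet
    (fun i _ => (cnt_finite C (g₂ i)).image _)
  have hsub : { w : List σ | w ∈ A ∧ w.length = m } ⊆ U1 ∪ U2 := by
    rintro w ⟨hwA, hwm⟩
    rcases h w hwA hwm with ⟨i, hit, π, hπ, hπlen, hF⟩ | ⟨i, hit, π, hπ, hπlen, hF⟩
    · exact Or.inl (Set.mem_biUnion hit ⟨π, ⟨hπ, hπlen⟩, hF⟩)
    · exact Or.inr (Set.mem_biUnion hit ⟨π, ⟨hπ, hπlen⟩, hF⟩)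
  calc cnt A m ≤ (U1 ∪ U2).ncard := Set.ncard_le_ncard hsub (hfin1.union hfin2)
    _ ≤ U1.ncard + U2.ncard := Set.ncard_union_le _ _
    _ ≤ _ := by
        gcongr
        · exact le_trans (ncard_biUnion_le' _ _)
            (Finset.sum_le_sum fun i _ => Set.ncard_image_le (cnt_finite B (g₁ i)))
        · exact le_trans (ncard_biUnion_le' _ _)
            (Finset.sum_le_sum fun i _ => Set.ncard_image_le (cnt_finite C (g₂ i)))

end CntAux

section DFAAux
variable {A Q : Type} [Fintype Q] (M : DFA A Q)

lemma dfa_eval_append (x y : List A) : M.eval (x ++ y) = M.evalFrom (M.eval x) y :=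
  M.evalFrom_of_append _ _ _

lemma dfa_short_eval (x : List A) :
    ∃ x' : List A, x'.length ≤ Fintype.card Q ∧ M.eval x' = M.eval x := by
  by_cases hc : x.length ≤ Fintype.card Q
  · exact ⟨x, hc, rfl⟩
  · push_neg at hc
    obtain ⟨i, j, hne, heq⟩ := Fintype.exists_ne_map_eq_of_card_lt
      (fun n : Fin (Fintype.card Q + 1) => M.eval (x.take n)) (by simp)
    have main : ∀ a b : ℕ, a < b → b ≤ Fintype.card Q → M.eval (x.take a) = M.eval (x.take b) →
        ∃ x', x'.length ≤ Fintype.card Q ∧ M.eval x' = M.eval x := by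
      intro a b hab hbc heq'
      have hx' : M.eval (x.take a ++ x.drop b) = M.eval x := by
        rw [dfa_eval_append, heq', ← dfa_eval_append, List.take_append_drop]
      have hlen : (x.take a ++ x.drop b).length < x.length := by
        simp only [List.length_append, List.length_take, List.length_drop]
        omega
      obtain ⟨x', hlen', heval⟩ := dfa_short_eval (x.take a ++ x.drop b)
      exact ⟨x', hlen', heval.trans hx'⟩
    rcases Ne.lt_or_gt hne with hij | hij
    · exact main i j hij (by have := j.2; omega) heq
    · exact main j i hij (by have := i.2; omega) heq.symm
termination_by x.length

lemma dfa_short_completion {w x : List A} (h : w ++ x ∈ M.accepts) :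
    ∃ z : List A, z.length ≤ Fintype.card Q ∧ w ++ z ∈ M.accepts := by
  let M' : DFA A Q := ⟨M.step, M.eval w, M.accept⟩
  have key : ∀ y : List A, M'.eval y = M.eval (w ++ y) := by
    intro y
    rw [dfa_eval_append]
    rfl
  obtain ⟨z, hz, heval⟩ := dfa_short_eval M' x
  refine ⟨z, hz, ?_⟩
  have hx : M.eval (w ++ x) ∈ M.accept := h
  show M.eval (w ++ z) ∈ M.accept
  rw [← key z, heval, key x]
  exact hx

lemma dfa_short_left {x w : List A} (h : x ++ w ∈ M.accepts) :
    ∃ z : List A, z.length ≤ Fintype.card Q ∧ z ++ w ∈ M.accepts := by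
  obtain ⟨z, hz, heval⟩ := dfa_short_eval M x
  refine ⟨z, hz, ?_⟩
  have hx : M.eval (x ++ w) ∈ M.accept := h
  show M.eval (z ++ w) ∈ M.accept
  rw [dfa_eval_append, heval, ← dfa_eval_append]
  exact hx

lemma dfa_short_infix {x u y : List A} (h : x ++ u ++ y ∈ M.accepts) :
    ∃ z₁ z₂ : List A, z₁.length ≤ Fintype.card Q ∧ z₂.length ≤ Fintype.card Q ∧
      z₁ ++ u ++ z₂ ∈ M.accepts := by
  rw [List.append_assoc] at h
  obtain ⟨z₁, hz₁, h1⟩ := dfa_short_left M h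
  rw [← List.append_assoc] at h1
  obtain ⟨z₂, hz₂, h2⟩ := dfa_short_completion M h1
  exact ⟨z₁, z₂, hz₁, hz₂, h2⟩

end DFAAux

section Canon
variable {σ : Type} (bar : σ → σ) (κ : ℕ) (L1 L2 : Language σ)

lemma exists_canonFact {π : List σ} (hπ : π ∈ hairpinCompletion bar κ L1 L2) :
    ∃ γ α β : List σ, CanonFact bar κ L1 L2 π γ α β := by
  classical
  -- the set of possible γ-lengths among decompositions with κ ≤ |α|
  set P : ℕ → Prop := fun g => ∃ γ α β : List σ,
      π = γ ++ α ++ β ++ ovr bar α ++ ovr bar γ ∧ κ ≤ α.length ∧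
      (γ ++ α ++ β ++ ovr bar α ∈ L1 ∨ α ++ β ++ ovr bar α ++ ovr bar γ ∈ L2) ∧
      γ.length = g with hP
  have hex : ∃ g, P g := by
    obtain ⟨γ, α, β, h1, h2, h3⟩ := hπ
    exact ⟨γ.length, γ, α, β, h1, h2, h3, rfl⟩
  obtain ⟨γ, α, β, heq, hlen, hmem, hγlen⟩ := Nat.find_spec hex
  have hmin : ∀ g, P g → Nat.find hex ≤ g := fun g hg => Nat.find_le hg
  -- normalize α to length exactly κ
  set α₁ : List σ := α.take κ with hα₁
  set α₂ : List σ := α.drop κ with hα₂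
  have hα : α = α₁ ++ α₂ := (List.take_append_drop κ α).symm
  have hα₁len : α₁.length = κ := by simp [hα₁, List.length_take]; omega
  set β' : List σ := α₂ ++ β ++ ovr bar α₂ with hβ'
  have heq' : π = γ ++ α₁ ++ β' ++ ovr bar α₁ ++ ovr bar γ := by
    rw [heq, hα, hβ']
    simp [ovr_append, List.append_assoc]
  have hword1 : γ ++ α ++ β ++ ovr bar α = γ ++ α₁ ++ β' ++ ovr bar α₁ := by
    rw [hα, hβ']; simp [ovr_append, List.append_assoc]
  have hword2 : α ++ β ++ ovr bar α ++ ovr bar γ = α₁ ++ β' ++ ovr bar α₁ ++ ovr bar γ := by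
    rw [hα, hβ']; simp [ovr_append, List.append_assoc]
  have hmem' : (γ ++ α₁ ++ β' ++ ovr bar α₁ ∈ L1 ∨
      α₁ ++ β' ++ ovr bar α₁ ++ ovr bar γ ∈ L2) := by
    rw [← hword1, ← hword2]; exact hmem
  refine ⟨γ, α₁, β', heq', hα₁len, hmem', ?_, ?_⟩
  · -- prefix condition
    intro u hu hu1
    have hw₁ : (γ ++ α₁ ++ β' ++ ovr bar α₁) ++ ovr bar γ = π := by
      rw [heq']
    have hw₁pre : γ ++ α₁ ++ β' ++ ovr bar α₁ <+: π := ⟨ovr bar γ, hw₁⟩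
    rcases List.prefix_or_prefix_of_prefix hu hw₁pre with h | h
    · exact h
    · obtain ⟨t, ht⟩ := h
      obtain ⟨r, hr⟩ := hu
      by_cases htnil : t = []
      · rw [← ht, htnil, List.append_nil]
      · exfalso
        have htr : t ++ r = ovr bar γ := by
          have : (γ ++ α₁ ++ β' ++ ovr bar α₁) ++ (t ++ r) = (γ ++ α₁ ++ β' ++ ovr bar α₁) ++ ovr bar γ := by
            rw [← List.append_assoc, ht, hr, ← hw₁]
          exact List.append_cancel_left this
        have htpre : t <+: ovr bar γ := ⟨r, htr⟩
        have hkle : t.length ≤ γ.length := by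
          have := htpre.length_le; simpa using this
        set k := t.length with hk
        have htake : t = (ovr bar γ).take k := by
          rw [← htr, List.take_left]
        have ht2 : t = ovr bar (γ.drop (γ.length - k)) := by
          rw [htake, ovr_take]
        set γp := γ.take (γ.length - k) with hγp
        set γs := γ.drop (γ.length - k) with hγs
        have hγsplit : γ = γp ++ γs := (List.take_append_drop _ γ).symm
        have hγplen : γp.length = γ.length - k := by
          simp [hγp, List.length_take]
        -- new decomposition with shorter γ
        have hπnew : π = γp ++ (γs ++ α₁) ++ β' ++ ovr bar (γs ++ α₁) ++ ovr bar γp := by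
          rw [heq']
          conv_lhs => rw [hγsplit]
          simp [ovr_append, List.append_assoc]
        have humem : γp ++ (γs ++ α₁) ++ β' ++ ovr bar (γs ++ α₁) = u := by
          rw [← ht, ht2]
          conv_rhs => rw [hγsplit]
          simp [ovr_append, List.append_assoc]
        have hPnew : P γp.length := by
          refine ⟨γp, γs ++ α₁, β', hπnew, ?_, Or.inl ?_, rfl⟩
          · simp [List.length_append]; omega
          · rw [humem]; exact hu1
        have := hmin _ hPnew
        have hklt : 1 ≤ k := by
          cases t with
          | nil => exact absurd rfl htnil
          | cons a l => simp [hk]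
        omega
  · -- suffix condition
    intro u hu hu2
    have hw₂ : γ ++ (α₁ ++ β' ++ ovr bar α₁ ++ ovr bar γ) = π := by
      rw [heq']; simp [List.append_assoc]
    have hw₂suf : α₁ ++ β' ++ ovr bar α₁ ++ ovr bar γ <:+ π := ⟨γ, hw₂⟩
    rcases List.suffix_or_suffix_of_suffix hu hw₂suf with h | h
    · exact h
    · obtain ⟨t, ht⟩ := h
      obtain ⟨r, hr⟩ := hu
      by_cases htnil : t = []
      · rw [← ht, htnil, List.nil_append]
      · exfalso
        have hrt : r ++ t = γ := by
          have : (r ++ t) ++ (α₁ ++ β' ++ ovr bar α₁ ++ ovr bar γ) =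
              γ ++ (α₁ ++ β' ++ ovr bar α₁ ++ ovr bar γ) := by
            rw [List.append_assoc, ht, hr, hw₂]
          exact List.append_cancel_right this
        have hπnew : π = r ++ (t ++ α₁) ++ β' ++ ovr bar (t ++ α₁) ++ ovr bar r := by
          rw [heq']
          conv_lhs => rw [← hrt]
          simp [ovr_append, List.append_assoc]
        have humem : (t ++ α₁) ++ β' ++ ovr bar (t ++ α₁) ++ ovr bar r = u := by
          rw [← ht]
          conv_rhs => rw [← hrt]
          simp [ovr_append, List.append_assoc]
        have hPnew : P r.length := by
          refine ⟨r, t ++ α₁, β', hπnew, ?_, Or.inr ?_, rfl⟩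
          · simp [List.length_append]; omega
          · rw [humem]; exact hu2
        have := hmin _ hPnew
        have : γ.length = r.length + t.length := by rw [← hrt]; simp
        have hklt : 1 ≤ t.length := by
          cases t with
          | nil => exact absurd rfl htnil
          | cons a l => simp
        omega

end Canon


section Growth
variable {σ : Type} [Fintype σ]

lemma growthInd_eq_sInf (L : Language σ) : growthInd L = sInf (gset L) := rfl

lemma gset_upward {L : Language σ} {l l' : ℝ} (hl : l ∈ gset L) (h : l ≤ l') : l' ∈ gset L := by
  obtain ⟨hl0, c, hc, hb⟩ := hl
  refine ⟨hl0.trans h, c, hc, fun m => (hb m).trans ?_⟩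
  gcongr

lemma card_mem_gset (L : Language σ) : (Fintype.card σ : ℝ) ∈ gset L := by
  refine ⟨by positivity, 1, one_pos, fun m => ?_⟩
  rw [one_mul]
  calc (cnt L m : ℝ) ≤ ((Fintype.card σ ^ m : ℕ) : ℝ) := by exact_mod_cast cnt_le_pow L m
    _ = (Fintype.card σ : ℝ) ^ m := by push_cast; ring

lemma gset_nonempty (L : Language σ) : (gset L).Nonempty := ⟨_, card_mem_gset L⟩

lemma gset_bddBelow (L : Language σ) : BddBelow (gset L) :=
  ⟨0, fun l hl => hl.1⟩

lemma growthInd_nonneg (L : Language σ) : 0 ≤ growthInd L :=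
  le_csInf (gset_nonempty L) (fun l hl => hl.1)

lemma growthInd_le_of_mem {L : Language σ} {l : ℝ} (hl : l ∈ gset L) : growthInd L ≤ l :=
  csInf_le (gset_bddBelow L) hl

lemma mem_gset_of_lt {L : Language σ} {l : ℝ} (h : growthInd L < l) : l ∈ gset L := by
  obtain ⟨x, hx, hxl⟩ := exists_lt_of_csInf_lt (gset_nonempty L) h
  exact gset_upward hx hxl.le

lemma growthInd_le_of_sections (A B : Language σ) (s : ℕ)
    (h : ∀ m, (cnt A m : ℝ) ≤ ∑ j ∈ Finset.range (s + 1), (cnt B (m + j) : ℝ)) :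
    growthInd A ≤ growthInd B := by
  rw [growthInd_eq_sInf, growthInd_eq_sInf]
  refine csInf_le_csInf (gset_bddBelow A) (gset_nonempty B) ?_
  rintro l ⟨hl0, c, hc, hb⟩
  set K : ℝ := ∑ j ∈ Finset.range (s + 1), l ^ j with hK
  have hK1 : 1 ≤ K := by
    rw [hK]
    calc (1:ℝ) = l ^ 0 := by simp
      _ ≤ _ := Finset.single_le_sum (f := fun j => l ^ j)
          (fun j _ => pow_nonneg hl0 j) (by simp)
  refine ⟨hl0, c * K, by positivity, fun m => ?_⟩
  calc (cnt A m : ℝ) ≤ ∑ j ∈ Finset.range (s + 1), (cnt B (m + j) : ℝ) := h m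
    _ ≤ ∑ j ∈ Finset.range (s + 1), c * l ^ (m + j) := by
        apply Finset.sum_le_sum; intro j _; exact hb (m + j)
    _ = c * K * l ^ m := by
        rw [Finset.mul_sum, Finset.sum_mul]
        apply Finset.sum_congr rfl; intro j _; rw [pow_add]; ring

end Growth

lemma exists_linear_bound {r : ℝ} (hr : 1 < r) :
    ∃ c : ℝ, 0 < c ∧ ∀ n : ℕ, (n + 1 : ℝ) ≤ c * r ^ n := by
  refine ⟨max 1 (1 / (r - 1)), lt_of_lt_of_le one_pos (le_max_left _ _), fun n => ?_⟩
  have h1 : (1 : ℝ) + n * (r - 1) ≤ r ^ n := by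
    have := one_add_mul_le_pow (a := r - 1) (by linarith) n
    simpa using this
  have hc1 : (1:ℝ) ≤ max 1 (1 / (r - 1)) := le_max_left _ _
  have hc2 : max 1 (1 / (r - 1)) * (r - 1) ≥ 1 := by
    have h3 : (1 / (r - 1)) * (r - 1) = 1 := one_div_mul_cancel (by linarith)
    calc max 1 (1 / (r - 1)) * (r - 1) ≥ (1 / (r - 1)) * (r - 1) := by
          apply mul_le_mul_of_nonneg_right (le_max_right _ _) (by linarith)
      _ = 1 := h3
  calc (n + 1 : ℝ) = 1 + n * 1 := by ring
    _ ≤ max 1 (1 / (r - 1)) + n * (max 1 (1 / (r - 1)) * (r - 1)) := by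
        have hn : (0:ℝ) ≤ n := Nat.cast_nonneg n
        nlinarith
    _ = max 1 (1 / (r - 1)) * (1 + n * (r - 1)) := by ring
    _ ≤ max 1 (1 / (r - 1)) * r ^ n := by
        apply mul_le_mul_of_nonneg_left h1 (by linarith)

lemma one_le_of_mem_gset_unbounded {σ : Type} [Fintype σ] {L : Language σ}
    (hU : ∀ N : ℕ, ∃ w ∈ L, N ≤ w.length) {l : ℝ} (hl : l ∈ gset L) : 1 ≤ l := by
  obtain ⟨hl0, c, hc, hb⟩ := hl
  by_contra hl1
  push_neg at hl1
  obtain ⟨n₀, hn₀⟩ := exists_pow_lt_of_lt_one (x := 1/c) (by positivity) hl1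
  obtain ⟨w, hw, hwlen⟩ := hU n₀
  set m := w.length with hm
  have hpos : 1 ≤ cnt L m := by
    have hne : { v : List σ | v ∈ L ∧ v.length = m }.Nonempty := ⟨w, hw, rfl⟩
    exact (Set.ncard_pos (cnt_finite L m)).mpr hne
  have hble := hb m
  have hlm : l ^ m ≤ l ^ n₀ := pow_le_pow_of_le_one hl0 hl1.le hwlen
  have : c * l ^ m < 1 := by
    calc c * l ^ m ≤ c * l ^ n₀ := by nlinarith
      _ < c * (1 / c) := by exact (mul_lt_mul_iff_right₀ hc).mpr hn₀
      _ = 1 := by field_simp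
  have h1 : (1 : ℝ) ≤ c * l ^ m := le_trans (by exact_mod_cast hpos) hble
  linarith

lemma growthInd_le_of_small {σ : Type} [Fintype σ] {L : Language σ} {N : ℕ}
    (hv : ∀ n, N < n → cnt L n = 0) {ε : ℝ} (hε : 0 < ε) : ε ∈ gset L := by
  set δ : ℝ := min ε 1 with hδ
  have hδ0 : 0 < δ := lt_min hε one_pos
  have hδ1 : δ ≤ 1 := min_le_right _ _
  refine ⟨hε.le, ((Fintype.card σ : ℝ) + 1) ^ N / δ ^ N, by positivity, fun m => ?_⟩
  by_cases hm : N < m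
  · rw [hv m hm]
    push_cast
    positivity
  · push_neg at hm
    have h1 : (cnt L m : ℝ) ≤ ((Fintype.card σ : ℝ) + 1) ^ N := by
      calc (cnt L m : ℝ) ≤ ((Fintype.card σ ^ m : ℕ) : ℝ) := by
            exact_mod_cast cnt_le_pow L m
        _ = (Fintype.card σ : ℝ) ^ m := by push_cast; ring
        _ ≤ ((Fintype.card σ : ℝ) + 1) ^ m := by gcongr <;> simp
        _ ≤ ((Fintype.card σ : ℝ) + 1) ^ N := by
            gcongr
            have : (0:ℝ) ≤ Fintype.card σ := by positivity
            linarith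
    have h2 : δ ^ N ≤ ε ^ m := by
      calc δ ^ N ≤ δ ^ m := pow_le_pow_of_le_one hδ0.le hδ1 hm
        _ ≤ ε ^ m := by gcongr <;> first | exact hδ0.le | exact min_le_left _ _
    calc (cnt L m : ℝ) ≤ ((Fintype.card σ : ℝ) + 1) ^ N := h1
      _ = ((Fintype.card σ : ℝ) + 1) ^ N / δ ^ N * δ ^ N := by field_simp
      _ ≤ ((Fintype.card σ : ℝ) + 1) ^ N / δ ^ N * ε ^ m := by
          gcongr

section Main
variable {σ : Type} [Fintype σ] (bar : σ → σ) (κ : ℕ) (L1 L2 : Language σ)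

lemma cnt_L1_le {Q : Type} [Fintype Q] (M : DFA σ Q)
    (hM : M.accepts = hairpinCompletion bar κ L1 L2)
    (hL1 : ∀ w ∈ L1, ∃ u α v : List σ, α.length = κ ∧ w = u ++ α ++ v ++ ovr bar α)
    (m : ℕ) :
    cnt L1 m ≤ ∑ j ∈ Finset.range (Fintype.card Q + 1),
      cnt (hairpinCompletion bar κ L1 L2) (m + j) := by
  apply cnt_le_one_cover L1 _ m _ (fun j => m + j) (fun _ π => π.take m)
  intro w hw hwm
  obtain ⟨u, α, v, hα, hweq⟩ := hL1 w hw
  have hπ0 : w ++ ovr bar u ∈ hairpinCompletion bar κ L1 L2 := by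
    refine ⟨u, α, v, by rw [hweq], hα.ge, Or.inl ?_⟩
    rw [← hweq]; exact hw
  rw [← hM] at hπ0
  obtain ⟨z, hzlen, hz⟩ := dfa_short_completion M hπ0
  rw [hM] at hz
  refine ⟨z.length, Finset.mem_range.mpr (by omega), w ++ z, hz, ?_, ?_⟩
  · simp [hwm]
  · exact List.take_left' hwm

lemma cnt_L2_le (hbar : ∀ a, bar (bar a) = a) {Q : Type} [Fintype Q] (M : DFA σ Q)
    (hM : M.accepts = hairpinCompletion bar κ L1 L2)
    (hL2 : ∀ w ∈ L2, ∃ α u v : List σ, α.length = κ ∧ w = α ++ u ++ ovr bar α ++ v)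
    (m : ℕ) :
    cnt L2 m ≤ ∑ j ∈ Finset.range (Fintype.card Q + 1),
      cnt (hairpinCompletion bar κ L1 L2) (m + j) := by
  apply cnt_le_one_cover L2 _ m _ (fun j => m + j) (fun j π => π.drop j)
  intro w hw hwm
  obtain ⟨α, u, v, hα, hweq⟩ := hL2 w hw
  have hπ0 : ovr bar v ++ w ∈ hairpinCompletion bar κ L1 L2 := by
    refine ⟨ovr bar v, α, u, ?_, hα.ge, Or.inr ?_⟩
    · rw [ovr_ovr hbar, hweq]; simp [List.append_assoc]
    · rw [ovr_ovr hbar, ← hweq]; exact hw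
  rw [← hM] at hπ0
  obtain ⟨z, hzlen, hz⟩ := dfa_short_left M hπ0
  rw [hM] at hz
  refine ⟨z.length, Finset.mem_range.mpr (by omega), z ++ w, hz, ?_, ?_⟩
  · simp [hwm, Nat.add_comm]
  · exact List.drop_left' rfl

lemma cnt_MGP_le (hbar : ∀ a, bar (bar a) = a)
    {Q1 Q2 : Type} [Fintype Q1] [Fintype Q2]
    (M1 : DFA σ Q1) (hM1 : M1.accepts = L1) (M2 : DFA σ Q2) (hM2 : M2.accepts = L2)
    (i : ℕ) :
    cnt (MGP bar κ L1 L2) i ≤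
      (∑ j ∈ Finset.range (Fintype.card Q1 + 1), cnt L1 (i + j)) +
      (∑ j ∈ Finset.range (Fintype.card Q2 + 1), cnt L2 (i + j)) := by
  apply cnt_le_two_covers (MGP bar κ L1 L2) L1 L2 i _ _ (fun j => i + j) (fun j => i + j)
    (fun _ π => π.take i) (fun j π => ovr bar (π.drop j))
  intro p hp hpi
  obtain ⟨π, γ, α, β, hπ, hcanon, hpeq⟩ := hp
  obtain ⟨heq, hακ, hdisj, -, -⟩ := hcanon
  rcases hdisj with h1 | h2
  · left
    have h1' : p ++ (β ++ ovr bar α) ∈ L1 := by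
      rw [hpeq]
      rw [show (γ ++ α) ++ (β ++ ovr bar α) = γ ++ α ++ β ++ ovr bar α by
        simp [List.append_assoc]]
      exact h1
    rw [← hM1] at h1'
    obtain ⟨z, hzlen, hz⟩ := dfa_short_completion M1 h1'
    rw [hM1] at hz
    refine ⟨z.length, Finset.mem_range.mpr (by omega), p ++ z, hz, ?_, ?_⟩
    · simp [hpi]
    · exact List.take_left' hpi
  · right
    have h2' : (α ++ β) ++ ovr bar p ∈ L2 := by
      rw [hpeq, ovr_append]
      rw [show (α ++ β) ++ (ovr bar α ++ ovr bar γ) = α ++ β ++ ovr bar α ++ ovr bar γ by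
        simp [List.append_assoc]]
      exact h2
    rw [← hM2] at h2'
    obtain ⟨z, hzlen, hz⟩ := dfa_short_left M2 h2'
    rw [hM2] at hz
    refine ⟨z.length, Finset.mem_range.mpr (by omega), z ++ ovr bar p, hz, ?_, ?_⟩
    · simp [hpi, Nat.add_comm]
    · rw [List.drop_left' rfl, ovr_ovr hbar]

lemma cnt_Mid_le {Q1 Q2 : Type} [Fintype Q1] [Fintype Q2]
    (M1 : DFA σ Q1) (hM1 : M1.accepts = L1) (M2 : DFA σ Q2) (hM2 : M2.accepts = L2)
    (m : ℕ) :
    cnt (Mid bar κ L1 L2) m ≤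
      (∑ q ∈ Finset.range (Fintype.card Q1 + 1) ×ˢ Finset.range (Fintype.card Q1 + 1),
        cnt L1 (m + q.1 + q.2)) +
      (∑ q ∈ Finset.range (Fintype.card Q2 + 1) ×ˢ Finset.range (Fintype.card Q2 + 1),
        cnt L2 (m + q.1 + q.2)) := by
  apply cnt_le_two_covers (Mid bar κ L1 L2) L1 L2 m
    (Finset.range (Fintype.card Q1 + 1) ×ˢ Finset.range (Fintype.card Q1 + 1))
    (Finset.range (Fintype.card Q2 + 1) ×ˢ Finset.range (Fintype.card Q2 + 1))
    (fun q => m + q.1 + q.2) (fun q => m + q.1 + q.2)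
    (fun q w => (w.drop q.1).take m) (fun q w => (w.drop q.1).take m)
  intro b hb hbm
  obtain ⟨π, γ, α, hπ, hcanon⟩ := hb
  obtain ⟨heq, hακ, hdisj, -, -⟩ := hcanon
  rcases hdisj with h1 | h2
  · left
    have h1' : (γ ++ α) ++ b ++ ovr bar α ∈ L1 := by
      rw [show (γ ++ α) ++ b ++ ovr bar α = γ ++ α ++ b ++ ovr bar α by
        simp [List.append_assoc]]
      exact h1
    rw [← hM1] at h1'
    obtain ⟨z1, z2, hz1, hz2, hz⟩ := dfa_short_infix M1 h1'
    rw [hM1] at hz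
    refine ⟨(z1.length, z2.length), ?_, z1 ++ b ++ z2, hz, ?_, ?_⟩
    · simp [Finset.mem_product, Finset.mem_range]; omega
    · simp [hbm]; omega
    · rw [List.append_assoc, List.drop_left' rfl, List.take_left' hbm]
  · right
    have h2' : α ++ b ++ (ovr bar α ++ ovr bar γ) ∈ L2 := by
      rw [show α ++ b ++ (ovr bar α ++ ovr bar γ) = α ++ b ++ ovr bar α ++ ovr bar γ by
        simp [List.append_assoc]]
      exact h2
    rw [← hM2] at h2'
    obtain ⟨z1, z2, hz1, hz2, hz⟩ := dfa_short_infix M2 h2'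
    rw [hM2] at hz
    refine ⟨(z1.length, z2.length), ?_, z1 ++ b ++ z2, hz, ?_, ?_⟩
    · simp [Finset.mem_product, Finset.mem_range]; omega
    · simp [hbm]; omega
    · rw [List.append_assoc, List.drop_left' rfl, List.take_left' hbm]

lemma cnt_H_le (n : ℕ) :
    cnt (hairpinCompletion bar κ L1 L2) n ≤
      ∑ i ∈ Finset.range (n + 1),
        cnt (MGP bar κ L1 L2) i * cnt (Mid bar κ L1 L2) (n - 2 * i) := by
  have hcov := ncard_cover_le
    { π : List σ | π ∈ hairpinCompletion bar κ L1 L2 ∧ π.length = n }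
    (Finset.range (n + 1))
    (fun i => (fun q : List σ × List σ => q.1 ++ q.2 ++ ovr bar q.1) ''
      ({ p : List σ | p ∈ MGP bar κ L1 L2 ∧ p.length = i } ×ˢ
       { b : List σ | b ∈ Mid bar κ L1 L2 ∧ b.length = n - 2 * i }))
    (fun i _ => ((cnt_finite _ i).prod (cnt_finite _ _)).image _)
    ?_
  · refine le_trans hcov (Finset.sum_le_sum fun i _ => ?_)
    refine le_trans (Set.ncard_image_le ((cnt_finite _ i).prod (cnt_finite _ _))) ?_
    rw [ncard_prod_eq]
    rfl
  · rintro π ⟨hπ, hπn⟩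
    obtain ⟨γ, α, β, hcanon⟩ := exists_canonFact bar κ L1 L2 hπ
    have heq := hcanon.1
    have hlens : π.length = γ.length + α.length + β.length + α.length + γ.length := by
      rw [heq]; simp; omega
    set p : List σ := γ ++ α with hpdef
    have hplen : p.length = γ.length + α.length := by simp [hpdef]
    refine ⟨p.length, Finset.mem_range.mpr (by omega), ?_⟩
    refine ⟨(p, β), ⟨⟨⟨π, γ, α, β, hπ, hcanon, rfl⟩, rfl⟩, ⟨π, γ, α, hπ, hcanon⟩, ?_⟩, ?_⟩
    · show β.length = n - 2 * p.length
      omega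
    show p ++ β ++ ovr bar p = π
    rw [heq, hpdef, ovr_append]
    simp [List.append_assoc]

end Main

theorem growth_of_regular_hairpin_completion
    {σ : Type} [Fintype σ] (hσ : 2 ≤ Fintype.card σ)
    (bar : σ → σ) (hbar : ∀ a, bar (bar a) = a)
    (κ : ℕ) (hκ : 1 ≤ κ)
    (L1 L2 : Language σ) (h1 : L1.IsRegular) (h2 : L2.IsRegular)
    (hL1 : ∀ w ∈ L1, ∃ u α v : List σ,
      α.length = κ ∧ w = u ++ α ++ v ++ ovr bar α)
    (hL2 : ∀ w ∈ L2, ∃ α u v : List σ,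
      α.length = κ ∧ w = α ++ u ++ ovr bar α ++ v)
    (hreg : (hairpinCompletion bar κ L1 L2).IsRegular) :
    growthInd (hairpinCompletion bar κ L1 L2) =
      max (growthInd L1) (growthInd L2) := by
  classical
  obtain ⟨QH, fQH, MH, hMH⟩ := hreg
  obtain ⟨Q1, fQ1, M1, hM1⟩ := h1
  obtain ⟨Q2, fQ2, M2, hM2⟩ := h2
  apply le_antisymm
  · -- upper bound: growthInd H ≤ max
    -- distinguish whether both languages are length-bounded
    by_cases hbnd : (∃ N, ∀ w ∈ L1, w.length ≤ N) ∧ (∃ N, ∀ w ∈ L2, w.length ≤ N)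
    · -- both bounded : H has words of bounded length only, growth 0
      obtain ⟨⟨N1, hN1⟩, ⟨N2, hN2⟩⟩ := hbnd
      have hvan : ∀ n, 2 * N1 + 2 * N2 < n →
          cnt (hairpinCompletion bar κ L1 L2) n = 0 := by
        intro n hn
        have hempty : { π : List σ | π ∈ hairpinCompletion bar κ L1 L2 ∧ π.length = n } = ∅ := by
          ext π
          simp only [Set.mem_setOf_eq, Set.mem_empty_iff_false, iff_false, not_and]
          rintro ⟨γ, α, β, heq, hκα, hd⟩ hπn
          have hlen : π.length = γ.length + α.length + β.length + α.length + γ.length := by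
            rw [heq]; simp; omega
          rcases hd with hw | hw
          · have := hN1 _ hw
            simp only [List.length_append, ovr_length] at this
            omega
          · have := hN2 _ hw
            simp only [List.length_append, ovr_length] at this
            omega
        show Set.ncard _ = 0
        rw [hempty, Set.ncard_empty]
      have hle0 : growthInd (hairpinCompletion bar κ L1 L2) ≤ 0 := by
        by_contra h0
        push_neg at h0
        have h2' := growthInd_le_of_mem
          (growthInd_le_of_small hvan (by linarith :
            (0:ℝ) < growthInd (hairpinCompletion bar κ L1 L2) / 2))
        linarith
      exact le_trans hle0 (le_trans (growthInd_nonneg L1) (le_max_left _ _))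
    · -- at least one language is unbounded, hence max of growths ≥ 1
      have hΛ1 : 1 ≤ max (growthInd L1) (growthInd L2) := by
        rw [not_and_or] at hbnd
        rcases hbnd with hb | hb
        · push_neg at hb
          refine le_trans ?_ (le_max_left _ _)
          refine le_csInf (gset_nonempty L1) (fun l hl => ?_)
          exact one_le_of_mem_gset_unbounded
            (fun N => by obtain ⟨w, hw, hlw⟩ := hb N; exact ⟨w, hw, hlw.le⟩) hl
        · push_neg at hb
          refine le_trans ?_ (le_max_right _ _)
          refine le_csInf (gset_nonempty L2) (fun l hl => ?_)
          exact one_le_of_mem_gset_unbounded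
            (fun N => by obtain ⟨w, hw, hlw⟩ := hb N; exact ⟨w, hw, hlw.le⟩) hl
      set Λ : ℝ := max (growthInd L1) (growthInd L2) with hΛ
      suffices hsuf : ∀ l' : ℝ, Λ < l' → growthInd (hairpinCompletion bar κ L1 L2) ≤ l' by
        by_contra hcon
        push_neg at hcon
        have := hsuf ((Λ + growthInd (hairpinCompletion bar κ L1 L2)) / 2) (by linarith)
        linarith
      intro l' hl'
      set l : ℝ := (Λ + l') / 2 with hldef
      have hΛl : Λ < l := by rw [hldef]; linarith
      have hll' : l < l' := by rw [hldef]; linarith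
      have hl1 : 1 < l := lt_of_le_of_lt hΛ1 hΛl
      have hg1 : growthInd L1 < l := lt_of_le_of_lt (le_max_left _ _) hΛl
      have hg2 : growthInd L2 < l := lt_of_le_of_lt (le_max_right _ _) hΛl
      obtain ⟨hl0, c1, hc1, hb1⟩ := mem_gset_of_lt hg1
      obtain ⟨-, c2, hc2, hb2⟩ := mem_gset_of_lt hg2
      set s1 := Fintype.card Q1 with hs1
      set s2 := Fintype.card Q2 with hs2
      set K1 : ℝ := ∑ j ∈ Finset.range (s1 + 1), l ^ j with hK1
      set K2 : ℝ := ∑ j ∈ Finset.range (s2 + 1), l ^ j with hK2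
      have hK1ge : 1 ≤ K1 := by
        rw [hK1]
        calc (1:ℝ) = l ^ 0 := by simp
          _ ≤ _ := Finset.single_le_sum (f := fun j => l ^ j)
              (fun j _ => pow_nonneg hl0 j) (by simp)
      have hK2ge : 1 ≤ K2 := by
        rw [hK2]
        calc (1:ℝ) = l ^ 0 := by simp
          _ ≤ _ := Finset.single_le_sum (f := fun j => l ^ j)
              (fun j _ => pow_nonneg hl0 j) (by simp)
      set CM : ℝ := c1 * K1 + c2 * K2 with hCM
      set CD : ℝ := c1 * (K1 * K1) + c2 * (K2 * K2) with hCD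
      have hK1pos : (0:ℝ) < K1 := by linarith
      have hK2pos : (0:ℝ) < K2 := by linarith
      have hCMpos : 0 < CM := by
        rw [hCM]; exact add_pos (mul_pos hc1 hK1pos) (mul_pos hc2 hK2pos)
      have hCDpos : 0 < CD := by
        rw [hCD]
        exact add_pos (mul_pos hc1 (mul_pos hK1pos hK1pos))
          (mul_pos hc2 (mul_pos hK2pos hK2pos))
      -- bound on MGP counts
      have hMGP : ∀ i : ℕ, (cnt (MGP bar κ L1 L2) i : ℝ) ≤ CM * l ^ i := by
        intro i
        have h := cnt_MGP_le bar κ L1 L2 hbar M1 hM1 M2 hM2 i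
        have hcast : (cnt (MGP bar κ L1 L2) i : ℝ) ≤
            (∑ j ∈ Finset.range (s1 + 1), (cnt L1 (i + j) : ℝ)) +
            (∑ j ∈ Finset.range (s2 + 1), (cnt L2 (i + j) : ℝ)) := by
          exact_mod_cast h
        have e1 : ∑ j ∈ Finset.range (s1 + 1), c1 * l ^ (i + j) = c1 * K1 * l ^ i := by
          calc ∑ j ∈ Finset.range (s1 + 1), c1 * l ^ (i + j)
              = ∑ j ∈ Finset.range (s1 + 1), (c1 * l ^ i) * l ^ j := by
                apply Finset.sum_congr rfl; intro j _; rw [pow_add]; ring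
            _ = (c1 * l ^ i) * K1 := by rw [← Finset.mul_sum]
            _ = c1 * K1 * l ^ i := by ring
        have e2 : ∑ j ∈ Finset.range (s2 + 1), c2 * l ^ (i + j) = c2 * K2 * l ^ i := by
          calc ∑ j ∈ Finset.range (s2 + 1), c2 * l ^ (i + j)
              = ∑ j ∈ Finset.range (s2 + 1), (c2 * l ^ i) * l ^ j := by
                apply Finset.sum_congr rfl; intro j _; rw [pow_add]; ring
            _ = (c2 * l ^ i) * K2 := by rw [← Finset.mul_sum]
            _ = c2 * K2 * l ^ i := by ring
        calc (cnt (MGP bar κ L1 L2) i : ℝ) ≤ _ := hcast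
          _ ≤ (∑ j ∈ Finset.range (s1 + 1), c1 * l ^ (i + j)) +
              (∑ j ∈ Finset.range (s2 + 1), c2 * l ^ (i + j)) := by
              gcongr with j hj j hj
              · exact hb1 (i + j)
              · exact hb2 (i + j)
          _ = CM * l ^ i := by rw [e1, e2, hCM]; ring
      -- bound on Mid counts
      have hMid : ∀ m : ℕ, (cnt (Mid bar κ L1 L2) m : ℝ) ≤ CD * l ^ m := by
        intro m
        have h := cnt_Mid_le bar κ L1 L2 M1 hM1 M2 hM2 m
        have hcast : (cnt (Mid bar κ L1 L2) m : ℝ) ≤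
            (∑ q ∈ Finset.range (s1 + 1) ×ˢ Finset.range (s1 + 1),
              (cnt L1 (m + q.1 + q.2) : ℝ)) +
            (∑ q ∈ Finset.range (s2 + 1) ×ˢ Finset.range (s2 + 1),
              (cnt L2 (m + q.1 + q.2) : ℝ)) := by
          exact_mod_cast h
        have e1 : ∑ q ∈ Finset.range (s1 + 1) ×ˢ Finset.range (s1 + 1),
            c1 * l ^ (m + q.1 + q.2) = c1 * (K1 * K1) * l ^ m := by
          calc ∑ q ∈ Finset.range (s1 + 1) ×ˢ Finset.range (s1 + 1), c1 * l ^ (m + q.1 + q.2)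
              = ∑ q ∈ Finset.range (s1 + 1) ×ˢ Finset.range (s1 + 1),
                  (c1 * l ^ m) * (l ^ q.1 * l ^ q.2) := by
                apply Finset.sum_congr rfl; intro q _; rw [pow_add, pow_add]; ring
            _ = (c1 * l ^ m) * ∑ q ∈ Finset.range (s1 + 1) ×ˢ Finset.range (s1 + 1),
                  l ^ q.1 * l ^ q.2 := by rw [← Finset.mul_sum]
            _ = (c1 * l ^ m) * (K1 * K1) := by
                rw [Finset.sum_product, hK1, Finset.sum_mul_sum]
            _ = c1 * (K1 * K1) * l ^ m := by ring
        have e2 : ∑ q ∈ Finset.range (s2 + 1) ×ˢ Finset.range (s2 + 1),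
            c2 * l ^ (m + q.1 + q.2) = c2 * (K2 * K2) * l ^ m := by
          calc ∑ q ∈ Finset.range (s2 + 1) ×ˢ Finset.range (s2 + 1), c2 * l ^ (m + q.1 + q.2)
              = ∑ q ∈ Finset.range (s2 + 1) ×ˢ Finset.range (s2 + 1),
                  (c2 * l ^ m) * (l ^ q.1 * l ^ q.2) := by
                apply Finset.sum_congr rfl; intro q _; rw [pow_add, pow_add]; ring
            _ = (c2 * l ^ m) * ∑ q ∈ Finset.range (s2 + 1) ×ˢ Finset.range (s2 + 1),
                  l ^ q.1 * l ^ q.2 := by rw [← Finset.mul_sum]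
            _ = (c2 * l ^ m) * (K2 * K2) := by
                rw [Finset.sum_product, hK2, Finset.sum_mul_sum]
            _ = c2 * (K2 * K2) * l ^ m := by ring
        calc (cnt (Mid bar κ L1 L2) m : ℝ) ≤ _ := hcast
          _ ≤ (∑ q ∈ Finset.range (s1 + 1) ×ˢ Finset.range (s1 + 1), c1 * l ^ (m + q.1 + q.2)) +
              (∑ q ∈ Finset.range (s2 + 1) ×ˢ Finset.range (s2 + 1), c2 * l ^ (m + q.1 + q.2)) := by
              gcongr with q hq q hq
              · exact hb1 (m + q.1 + q.2)
              · exact hb2 (m + q.1 + q.2)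
          _ = CD * l ^ m := by rw [e1, e2, hCD]; ring
      -- bound on H counts
      have hHb : ∀ n : ℕ, (cnt (hairpinCompletion bar κ L1 L2) n : ℝ) ≤
          ((n : ℝ) + 1) * (CM * CD) * l ^ n := by
        intro n
        have h := cnt_H_le bar κ L1 L2 n
        have hcast : (cnt (hairpinCompletion bar κ L1 L2) n : ℝ) ≤
            ∑ i ∈ Finset.range (n + 1),
              (cnt (MGP bar κ L1 L2) i : ℝ) * (cnt (Mid bar κ L1 L2) (n - 2 * i) : ℝ) := by
          exact_mod_cast h
        calc (cnt (hairpinCompletion bar κ L1 L2) n : ℝ) ≤ _ := hcast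
          _ ≤ ∑ i ∈ Finset.range (n + 1), CM * CD * l ^ n := by
              apply Finset.sum_le_sum
              intro i hi
              have hi' : i ≤ n := by
                have := Finset.mem_range.mp hi; omega
              have h1 := hMGP i
              have h2 := hMid (n - 2 * i)
              have hterm : (cnt (MGP bar κ L1 L2) i : ℝ) * (cnt (Mid bar κ L1 L2) (n - 2 * i) : ℝ)
                  ≤ (CM * l ^ i) * (CD * l ^ (n - 2 * i)) := by
                exact mul_le_mul h1 h2 (Nat.cast_nonneg _)
                  (mul_nonneg hCMpos.le (pow_nonneg hl0 i))
              refine le_trans hterm ?_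
              have hexp : l ^ i * l ^ (n - 2 * i) = l ^ (i + (n - 2 * i)) := (pow_add l _ _).symm
              have hle : l ^ (i + (n - 2 * i)) ≤ l ^ n := by
                gcongr
                · exact hl1.le
                · omega
              calc (CM * l ^ i) * (CD * l ^ (n - 2 * i))
                  = CM * CD * (l ^ i * l ^ (n - 2 * i)) := by ring
                _ = CM * CD * l ^ (i + (n - 2 * i)) := by rw [hexp]
                _ ≤ CM * CD * l ^ n :=
                    mul_le_mul_of_nonneg_left hle (mul_pos hCMpos hCDpos).le
          _ = ((n : ℝ) + 1) * (CM * CD) * l ^ n := by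
              rw [Finset.sum_const, Finset.card_range, nsmul_eq_mul]
              push_cast
              ring
      -- absorb the polynomial factor
      have hlne : l ≠ 0 := by linarith
      have hr : 1 < l' / l := (one_lt_div (by linarith)).mpr hll'
      obtain ⟨c3, hc3, hc3b⟩ := exists_linear_bound hr
      apply growthInd_le_of_mem
      refine ⟨by linarith, c3 * (CM * CD),
        mul_pos hc3 (mul_pos hCMpos hCDpos), fun n => ?_⟩
      calc (cnt (hairpinCompletion bar κ L1 L2) n : ℝ)
          ≤ ((n : ℝ) + 1) * (CM * CD) * l ^ n := hHb n
        _ ≤ (c3 * (l' / l) ^ n) * (CM * CD) * l ^ n :=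
            mul_le_mul_of_nonneg_right
              (mul_le_mul_of_nonneg_right (hc3b n) (mul_pos hCMpos hCDpos).le)
              (pow_nonneg hl0 n)
        _ = c3 * (CM * CD) * ((l' / l) ^ n * l ^ n) := by ring
        _ = c3 * (CM * CD) * l' ^ n := by
            rw [← mul_pow, div_mul_cancel₀ _ hlne]
  · -- lower bound: max ≤ growthInd H
    apply max_le
    · apply growthInd_le_of_sections L1 (hairpinCompletion bar κ L1 L2) (Fintype.card QH)
      intro m
      exact_mod_cast cnt_L1_le bar κ L1 L2 MH hMH hL1 m
    · apply growthInd_le_of_sections L2 (hairpinCompletion bar κ L1 L2) (Fintype.card QH)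
      intro m
      exact_mod_cast cnt_L2_le bar κ L1 L2 hbar MH hMH hL2 m
end
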